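/- Let c > 1 and u₀ = (3c − √(c²+8))/2. Then f(c) := u₀ + (c/2)u₀² − (1/6)u₀³ − c·ln(c/(c−u₀)) is strictly positive. Equivalently, −(1/6)(2+c²)(√(c²+8) − 3c) − c·ln((1/4)c(c+√(c²+8))) > 0 for all c > 1. -/

import Mathlib

lemma aux_log_le_half_sub_inv {x : ℝ} (hx : 1 ≤ x) :
    Real.log x ≤ (x - x⁻¹) / 2 := by
  have hmono : MonotoneOn (fun y : ℝ => (y - y⁻¹) / 2 - Real.log y) (Set.Ici 1) := by
    apply monotoneOn_of_deriv_nonneg (convex_Ici 1)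
    · apply ContinuousOn.sub
      · apply ContinuousOn.div_const
        apply ContinuousOn.sub continuousOn_id
        exact ContinuousOn.inv₀ continuousOn_id (fun y hy =>
          ne_of_gt (by simpa using lt_of_lt_of_le zero_lt_one hy))
      · exact ContinuousOn.log continuousOn_id (fun y hy =>
          ne_of_gt (by simpa using lt_of_lt_of_le zero_lt_one hy))
    · intro y hy
      rw [interior_Ici] at hy
      have hy1 : 1 < y := hy
      have hy0 : y ≠ 0 := by linarith
      exact (((((hasDerivAt_id y).sub (hasDerivAt_inv hy0)).div_const 2).sub
        (Real.hasDerivAt_log hy0)).differentiableAt).differentiableWithinAt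
    · intro y hy
      rw [interior_Ici] at hy
      have hy1 : 1 < y := hy
      have hy0 : y ≠ 0 := by linarith
      have hd : HasDerivAt (fun y : ℝ => (y - y⁻¹) / 2 - Real.log y)
          ((1 - (-(y ^ 2)⁻¹)) / 2 - y⁻¹) y :=
        (((hasDerivAt_id y).sub (hasDerivAt_inv hy0)).div_const 2).sub
          (Real.hasDerivAt_log hy0)
      rw [hd.deriv]
      have heq : (1 - (-(y ^ 2)⁻¹)) / 2 - y⁻¹ = (y - 1) ^ 2 / (2 * y ^ 2) := by
        field_simp
        ring
      rw [heq]
      positivity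
  have h1 : (1:ℝ) ∈ Set.Ici (1:ℝ) := Set.mem_Ici.2 le_rfl
  have hxm : x ∈ Set.Ici (1:ℝ) := Set.mem_Ici.2 hx
  have := hmono h1 hxm hx
  simp at this
  linarith

theorem dissipation_integral_positive (c : ℝ) (hc : 1 < c) :
    (0 < (3 * c - Real.sqrt (c ^ 2 + 8)) / 2
        + c / 2 * ((3 * c - Real.sqrt (c ^ 2 + 8)) / 2) ^ 2
        - 1 / 6 * ((3 * c - Real.sqrt (c ^ 2 + 8)) / 2) ^ 3
        - c * Real.log (c / (c - (3 * c - Real.sqrt (c ^ 2 + 8)) / 2))) ∧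
    (0 < -(1 / 6) * (2 + c ^ 2) * (Real.sqrt (c ^ 2 + 8) - 3 * c)
        - c * Real.log (1 / 4 * c * (c + Real.sqrt (c ^ 2 + 8)))) := by
  set s := Real.sqrt (c ^ 2 + 8) with hs_def
  have hc0 : (0:ℝ) < c := by linarith
  have h8 : (0:ℝ) < c ^ 2 + 8 := by positivity
  have hs2 : s ^ 2 = c ^ 2 + 8 := Real.sq_sqrt h8.le
  have hs_pos : 0 < s := Real.sqrt_pos.2 h8
  have hcs : c < s := by nlinarith
  have hs3c : s < 3 * c := by nlinarith
  have hs3 : 3 < s := by nlinarith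
  -- rewrite the first log argument
  have hscne : s - c ≠ 0 := by linarith
  have hlogarg : c / (c - (3 * c - s) / 2) = c * (c + s) / 4 := by
    have h2 : c - (3 * c - s) / 2 = (s - c) / 2 := by ring
    rw [h2, div_div_eq_mul_div, div_eq_div_iff (by linarith) (by norm_num)]
    linear_combination (-c) * hs2
  have hx1 : 1 ≤ c * (c + s) / 4 := by nlinarith
  have hx0 : (0:ℝ) < c * (c + s) / 4 := by positivity
  have hinv : (c * (c + s) / 4)⁻¹ = (s - c) / (2 * c) := by
    refine inv_eq_of_mul_eq_one_right ?_
    field_simp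
    linear_combination hs2
  have hlog : Real.log (c * (c + s) / 4) ≤ (c * (c + s) / 4 - (s - c) / (2 * c)) / 2 := by
    have := aux_log_le_half_sub_inv hx1
    rw [hinv] at this
    exact this
  have hclog : c * Real.log (c * (c + s) / 4) ≤
      c * ((c * (c + s) / 4 - (s - c) / (2 * c)) / 2) :=
    mul_le_mul_of_nonneg_left hlog hc0.le
  have hclog' : c * ((c * (c + s) / 4 - (s - c) / (2 * c)) / 2)
      = c ^ 2 * (c + s) / 8 - (s - c) / 4 := by
    field_simp
    ring
  have hkey : s * (7 * c ^ 2 + 2) < 9 * c ^ 3 + 18 * c := by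
    have hpos : 0 < 9 * c ^ 3 + 18 * c + s * (7 * c ^ 2 + 2) := by positivity
    have hcube : 0 < (c ^ 2 - 1) ^ 3 := by
      have : 0 < c ^ 2 - 1 := by nlinarith
      positivity
    have h6 : s ^ 2 * (7 * c ^ 2 + 2) ^ 2 = (c ^ 2 + 8) * (7 * c ^ 2 + 2) ^ 2 := by
      rw [hs2]
    nlinarith [hpos, hcube, h6]
  -- core inequality
  have hcore : 0 < (c ^ 2 + 2) / 3 * ((3 * c - s) / 2)
      - c * Real.log (c * (c + s) / 4) := by
    have hpoly : c ^ 2 * (c + s) / 8 - (s - c) / 4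
        < (c ^ 2 + 2) / 3 * ((3 * c - s) / 2) := by nlinarith [hkey]
    calc (0:ℝ) < (c ^ 2 + 2) / 3 * ((3 * c - s) / 2)
          - (c ^ 2 * (c + s) / 8 - (s - c) / 4) := by linarith
      _ ≤ (c ^ 2 + 2) / 3 * ((3 * c - s) / 2) - c * Real.log (c * (c + s) / 4) := by
          rw [← hclog'] at *; linarith
  constructor
  · rw [hlogarg]
    have hident : (3 * c - s) / 2 + c / 2 * ((3 * c - s) / 2) ^ 2
        - 1 / 6 * ((3 * c - s) / 2) ^ 3 = (c ^ 2 + 2) / 3 * ((3 * c - s) / 2) := by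
      linear_combination (s / 48 - c / 16) * hs2
    linarith [hcore, hident.ge, hident.le]
  · have harg : 1 / 4 * c * (c + s) = c * (c + s) / 4 := by ring
    rw [harg]
    have hident2 : -(1 / 6) * (2 + c ^ 2) * (s - 3 * c)
        = (c ^ 2 + 2) / 3 * ((3 * c - s) / 2) := by ring
    linarith [hcore]
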